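/- If f, h : G → U_t are unitary-matrix-valued functions on a finite group G, then the function ψ(a) = ‖(h*f)(a)‖²_HS has Fourier algebra norm at most t: ‖ψ‖_A ≤ t. -/

import Mathlib

open scoped Kronecker ComplexOrder
open Finset Matrix

attribute [local instance] Classical.propDecidable

noncomputable section

def hsNormSq {m n : Type*} [Fintype m] [Fintype n] (A : Matrix m n ℂ) : ℝ :=
  ∑ i, ∑ j, Complex.normSq (A i j)

def vnorm {n : ℕ} (u : Fin n → ℂ) : ℝ := Real.sqrt (∑ i, Complex.normSq (u i))

def opNorm {d : ℕ} (M : Matrix (Fin d) (Fin d) ℂ) : ℝ :=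
  ‖Matrix.toEuclideanCLM (𝕜 := ℂ) M‖

def traceNorm {m : Type*} [Fintype m] [DecidableEq m] (A : Matrix m m ℂ) : ℝ :=
  (((Matrix.posSemidef_conjTranspose_mul_self A).1.eigenvectorUnitary : Matrix m m ℂ) *
    diagonal (((↑) : ℝ → ℂ) ∘ Real.sqrt ∘ (Matrix.posSemidef_conjTranspose_mul_self A).1.eigenvalues) *
    (star (Matrix.posSemidef_conjTranspose_mul_self A).1.eigenvectorUnitary : Matrix m m ℂ)).trace.re

variable {G : Type*} [Group G] [Fintype G]

def conv {t : ℕ} (f g : G → Matrix (Fin t) (Fin t) ℂ) (x : G) : Matrix (Fin t) (Fin t) ℂ :=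
  (Fintype.card G : ℂ)⁻¹ • ∑ y, f (x * y⁻¹) * g y

def adjFun {t : ℕ} (f : G → Matrix (Fin t) (Fin t) ℂ) (x : G) : Matrix (Fin t) (Fin t) ℂ :=
  (f x⁻¹)ᴴ

def fourierMat {t d : ℕ} (f : G → Matrix (Fin t) (Fin t) ℂ)
    (ρ : G →* Matrix.unitaryGroup (Fin d) ℂ) : Matrix (Fin t × Fin d) (Fin t × Fin d) ℂ :=
  (Fintype.card G : ℂ)⁻¹ • ∑ x, (f x) ⊗ₖ (ρ x : Matrix (Fin d) (Fin d) ℂ)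

def l2sq {t : ℕ} (f : G → Matrix (Fin t) (Fin t) ℂ) : ℝ :=
  (Fintype.card G : ℝ)⁻¹ * ∑ x, hsNormSq (f x)

def u2pow4 {t : ℕ} (f : G → Matrix (Fin t) (Fin t) ℂ) : ℝ := l2sq (conv (adjFun f) f)

def IsIrred {d : ℕ} (ρ : G →* Matrix.unitaryGroup (Fin d) ℂ) : Prop :=
  ∀ M : Matrix (Fin d) (Fin d) ℂ,
    (∀ g, (ρ g : Matrix (Fin d) (Fin d) ℂ) * M = M * (ρ g : Matrix (Fin d) (Fin d) ℂ)) →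
    ∃ c : ℂ, M = c • (1 : Matrix (Fin d) (Fin d) ℂ)

def IsNontrivialRep {d : ℕ} (ρ : G →* Matrix.unitaryGroup (Fin d) ℂ) : Prop :=
  ∃ g, (ρ g : Matrix (Fin d) (Fin d) ℂ) ≠ 1

def IsBiased (S : Finset G) (ε : ℝ) : Prop :=
  S.Nonempty ∧ ∀ (d : ℕ) (ρ : G →* Matrix.unitaryGroup (Fin d) ℂ),
    IsIrred ρ → IsNontrivialRep ρ →
    opNorm ((S.card : ℂ)⁻¹ • ∑ s ∈ S, (ρ s : Matrix (Fin d) (Fin d) ℂ)) ≤ ε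

def Tmat (f : G → ℂ) : Matrix G G ℂ := fun x y => f (x⁻¹ * y) / (Fintype.card G : ℂ)

/-! ### Auxiliary material for `psi_algebra_norm_unitary` -/

section PermAux
variable {I : Type*} [Fintype I] [DecidableEq I]

/-- The permutation matrix of `σ`, with `pmat σ i j = 1` iff `j = σ i`. -/
def pmat (σ : Equiv.Perm I) : Matrix I I ℂ :=
  Matrix.of fun i j => if j = σ i then 1 else 0

lemma pmat_mul (σ τ : Equiv.Perm I) : pmat σ * pmat τ = pmat (τ * σ) := by
  ext i j
  rw [Matrix.mul_apply, Finset.sum_eq_single (σ i)]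
  · simp [pmat, Equiv.Perm.mul_apply]
    congr
  · intro x _ hx
    simp [pmat, hx]
  · simp

lemma pmat_one : pmat (1 : Equiv.Perm I) = 1 := by
  ext i j
  simp [pmat, Matrix.one_apply, eq_comm]

lemma pmat_conjTranspose (σ : Equiv.Perm I) : (pmat σ)ᴴ = pmat σ⁻¹ := by
  ext i j
  have hiff : (i = σ j) ↔ (j = σ⁻¹ i) := by
    constructor <;> intro hh <;> simp [hh]
  simp [pmat, Matrix.conjTranspose_apply, hiff, apply_ite (starRingEnd ℂ)]

lemma pmat_mem (σ : Equiv.Perm I) : pmat σ ∈ Matrix.unitaryGroup I ℂ := by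
  rw [Matrix.mem_unitaryGroup_iff', Matrix.star_eq_conjTranspose, pmat_conjTranspose, pmat_mul]
  simp [pmat_one]

lemma pmat_mulVec (σ : Equiv.Perm I) (v : I → ℂ) (i : I) :
    (pmat σ).mulVec v i = v (σ i) := by
  simp [pmat, Matrix.mulVec, dotProduct, ite_mul, Finset.sum_ite_eq']

end PermAux

section RepAux

/-- Right translation on both `G`-coordinates of `(G × Fin t) × (G × Fin t)`. -/
def rAct (t : ℕ) (a : G) : Equiv.Perm ((G × Fin t) × (G × Fin t)) :=
  Equiv.prodCongr (Equiv.prodCongr (Equiv.mulRight a) (Equiv.refl (Fin t)))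
                  (Equiv.prodCongr (Equiv.mulRight a) (Equiv.refl (Fin t)))

lemma rAct_apply (t : ℕ) (a : G) (m : (G × Fin t) × (G × Fin t)) :
    rAct t a m = ((m.1.1 * a, m.1.2), (m.2.1 * a, m.2.2)) := rfl

/-- `rAct` transported to `Fin (card _)`. -/
def bigPerm (t : ℕ) (a : G) : Equiv.Perm (Fin (Fintype.card ((G × Fin t) × (G × Fin t)))) :=
  ((Fintype.equivFin _).symm.trans (rAct t a)).trans (Fintype.equivFin _)

/-- The (doubled) right regular representation as unitary (permutation) matrices. -/
def bigRep (t : ℕ) : G →* Matrix.unitaryGroup (Fin (Fintype.card ((G × Fin t) × (G × Fin t)))) ℂ where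
  toFun a := ⟨pmat (bigPerm t a), pmat_mem _⟩
  map_one' := Subtype.ext (by
    have h1 : bigPerm (G := G) t 1 = 1 := by
      ext m : 1
      simp [bigPerm, rAct_apply]
    show pmat (bigPerm (G := G) t 1) = _
    rw [h1, pmat_one]
    rfl)
  map_mul' a b := Subtype.ext (by
    have h1 : bigPerm (G := G) t (a * b) = bigPerm t b * bigPerm t a := by
      ext m : 1
      simp [bigPerm, rAct_apply, Equiv.Perm.mul_apply, mul_assoc]
    show pmat (bigPerm (G := G) t (a * b)) = _
    rw [h1, ← pmat_mul]
    rfl)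

end RepAux

/-- The entries of a unitary matrix have total squared norm `t`. -/
lemma unitary_hs {t : ℕ} {B : Matrix (Fin t) (Fin t) ℂ}
    (hB : B ∈ Matrix.unitaryGroup (Fin t) ℂ) :
    ∑ k, ∑ l, Complex.normSq (B k l) = t := by
  have h1 : B * Bᴴ = 1 := by
    rw [← Matrix.star_eq_conjTranspose]
    exact Matrix.mem_unitaryGroup_iff.mp hB
  have h2 : ∀ k, ∑ l, Complex.normSq (B k l) = ((B * Bᴴ) k k).re := by
    intro k
    rw [Matrix.mul_apply, Complex.re_sum]
    refine Finset.sum_congr rfl fun l _ => ?_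
    simp [Matrix.conjTranspose_apply, Complex.star_def, Complex.mul_conj]
  simp [h2, h1, Matrix.one_apply]

/-- Cast of `hsNormSq` to `ℂ` as a sum of `conj z * z` over a product index. -/
lemma hs_cast {t : ℕ} (M : Matrix (Fin t) (Fin t) ℂ) :
    ((hsNormSq M : ℝ) : ℂ) = ∑ r : Fin t × Fin t, (starRingEnd ℂ) (M r.1 r.2) * M r.1 r.2 := by
  rw [hsNormSq, Fintype.sum_prod_type]
  push_cast
  refine Finset.sum_congr rfl fun i _ => Finset.sum_congr rfl fun j _ => ?_
  rw [mul_comm, Complex.mul_conj]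

lemma conj_mul_expand {κ : Type*} [Fintype κ] (c : ℕ) (S : κ → ℂ) :
    (starRingEnd ℂ) ((c : ℂ)⁻¹ * ∑ p, S p) * ((c : ℂ)⁻¹ * ∑ p, S p)
      = (c : ℂ)⁻¹ * (c : ℂ)⁻¹ * ∑ m : κ × κ, (starRingEnd ℂ) (S m.1) * S m.2 := by
  rw [Fintype.sum_prod_type]
  have hproj : ∀ x y : κ, (starRingEnd ℂ) (S (x, y).1) * S (x, y).2
      = (starRingEnd ℂ) (S x) * S y := fun x y => rfl
  simp only [hproj]
  rw [← Finset.sum_mul_sum, _root_.map_mul, map_inv₀, Complex.conj_natCast, map_sum]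
  ring

lemma prod_sum_helper {t : ℕ} (A B C D : Fin t → ℂ) (K : ℂ) :
    (∑ i, A i * B i) * (K * ∑ j, C j * D j)
      = K * ∑ r : Fin t × Fin t, (A r.1 * C r.2) * (B r.1 * D r.2) := by
  rw [Fintype.sum_prod_type]
  have hcomm : ∀ i j : Fin t, (A i * C j) * (B i * D j) = (A i * B i) * (C j * D j) :=
    fun i j => by ring
  simp only [hcomm]
  rw [← Finset.sum_mul_sum]
  ring

theorem psi_algebra_norm_unitary {G : Type*} [Group G] [Fintype G] {t : ℕ}
    (f h : G → Matrix (Fin t) (Fin t) ℂ)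
    (hf : ∀ x, f x ∈ Matrix.unitaryGroup (Fin t) ℂ)
    (hh : ∀ x, h x ∈ Matrix.unitaryGroup (Fin t) ℂ) :
    ∃ (n : ℕ) (π : G →* Matrix.unitaryGroup (Fin n) ℂ) (u v : Fin n → ℂ),
      (∀ a, ((hsNormSq (conv h f a) : ℝ) : ℂ) =
        ∑ i, (starRingEnd ℂ) (u i) * ((π a : Matrix (Fin n) (Fin n) ℂ).mulVec v) i) ∧
      vnorm u * vnorm v ≤ (t : ℝ) := by
  have hc0 : (0:ℝ) < (Fintype.card G : ℝ) := by exact_mod_cast Fintype.card_pos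
  set e := Fintype.equivFin ((G × Fin t) × (G × Fin t)) with he
  set U : (G × Fin t) × (G × Fin t) → ℂ :=
    fun m => ∑ i, h m.1.1⁻¹ i m.1.2 * (starRingEnd ℂ) (h m.2.1⁻¹ i m.2.2) with hU
  set V : (G × Fin t) × (G × Fin t) → ℂ :=
    fun m => (Fintype.card G : ℂ)⁻¹ * (Fintype.card G : ℂ)⁻¹ *
      ∑ j, (starRingEnd ℂ) (f m.1.1 m.1.2 j) * f m.2.1 m.2.2 j with hV
  refine ⟨_, bigRep t, fun i => U (e.symm i), fun i => V (e.symm i), ?_, ?_⟩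
  · -- the matrix-coefficient identity
    intro a
    set x : (G × Fin t) → Fin t × Fin t → ℂ :=
      fun p r => h p.1⁻¹ r.1 p.2 * f (p.1 * a) p.2 r.2 with hx
    have hmv : ∀ i, ((bigRep (G := G) t a : Matrix _ _ ℂ).mulVec (fun i => V (e.symm i))) i
        = V (rAct t a (e.symm i)) := by
      intro i
      show (pmat (bigPerm t a)).mulVec _ i = _
      rw [pmat_mulVec]
      show V (e.symm (e (rAct t a (e.symm i)))) = _
      rw [Equiv.symm_apply_apply]
    have hg : ∀ r : Fin t × Fin t, conv h f a r.1 r.2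
        = (Fintype.card G : ℂ)⁻¹ * ∑ p : G × Fin t, x p r := by
      intro r
      rw [conv, Matrix.smul_apply, Matrix.sum_apply, smul_eq_mul]
      congr 1
      rw [Fintype.sum_prod_type]
      refine (Fintype.sum_equiv (Equiv.mulRight a)
        (fun w => ∑ k, x (w, k) r) (fun y => (h (a * y⁻¹) * f y) r.1 r.2) ?_).symm
      intro w
      simp only [hx, Equiv.coe_mulRight, Matrix.mul_apply]
      refine Finset.sum_congr rfl fun k _ => ?_
      simp [_root_.mul_inv_rev, mul_inv_cancel_left]
    calc ((hsNormSq (conv h f a) : ℝ) : ℂ)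
        = ∑ r : Fin t × Fin t, (starRingEnd ℂ) (conv h f a r.1 r.2) * conv h f a r.1 r.2 :=
          hs_cast _
      _ = ∑ r : Fin t × Fin t, (Fintype.card G : ℂ)⁻¹ * (Fintype.card G : ℂ)⁻¹ *
            ∑ m : (G × Fin t) × (G × Fin t),
              (starRingEnd ℂ) (x m.1 r) * x m.2 r := by
          refine Finset.sum_congr rfl fun r _ => ?_
          rw [hg r, conj_mul_expand (Fintype.card G) (fun p => x p r)]
      _ = ∑ m : (G × Fin t) × (G × Fin t), (Fintype.card G : ℂ)⁻¹ * (Fintype.card G : ℂ)⁻¹ *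
            ∑ r : Fin t × Fin t, (starRingEnd ℂ) (x m.1 r) * x m.2 r := by
          rw [← Finset.mul_sum, Finset.sum_comm, Finset.mul_sum]
      _ = ∑ m : (G × Fin t) × (G × Fin t), (starRingEnd ℂ) (U m) * V (rAct t a m) := by
          refine (Finset.sum_congr rfl fun m _ => ?_).symm
          simp only [hU, hV, hx, rAct_apply, _root_.map_mul, map_sum, Complex.conj_conj]
          exact prod_sum_helper _ _ _ _ _
      _ = ∑ i, (starRingEnd ℂ) (U (e.symm i)) * V (rAct t a (e.symm i)) :=
          (Equiv.sum_comp e.symm fun m => (starRingEnd ℂ) (U m) * V (rAct t a m)).symm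
      _ = ∑ i, (starRingEnd ℂ) (U (e.symm i)) *
            ((bigRep (G := G) t a : Matrix _ _ ℂ).mulVec (fun i => V (e.symm i))) i := by
          refine Finset.sum_congr rfl fun i _ => ?_
          rw [hmv]
  · -- the norm bound
    have hcne : (Fintype.card G : ℝ) ≠ 0 := ne_of_gt hc0
    have hBh : ∀ w z : G, ∑ k, ∑ l, Complex.normSq (U ((w, k), (z, l))) = t := by
      intro w z
      have hBmem : (h w⁻¹)ᴴ * h z⁻¹ ∈ Matrix.unitaryGroup (Fin t) ℂ := by
        rw [← Matrix.star_eq_conjTranspose]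
        exact mul_mem (Unitary.star_mem (hh _)) (hh _)
      rw [← unitary_hs hBmem]
      refine Finset.sum_congr rfl fun k _ => Finset.sum_congr rfl fun l _ => ?_
      have hrw : U ((w, k), (z, l)) = (starRingEnd ℂ) (((h w⁻¹)ᴴ * h z⁻¹) k l) := by
        simp only [hU, Matrix.mul_apply, Matrix.conjTranspose_apply, Complex.star_def,
          map_sum, _root_.map_mul, Complex.conj_conj]
      rw [hrw, Complex.normSq_conj]
    have hBf : ∀ w z : G, ∑ k, ∑ l, Complex.normSq (V ((w, k), (z, l)))
        = ((Fintype.card G : ℝ) * (Fintype.card G : ℝ))⁻¹ *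
          (((Fintype.card G : ℝ) * (Fintype.card G : ℝ))⁻¹ * t) := by
      intro w z
      have hDmem : f z * (f w)ᴴ ∈ Matrix.unitaryGroup (Fin t) ℂ := by
        rw [← Matrix.star_eq_conjTranspose]
        exact mul_mem (hf z) (Unitary.star_mem (hf w))
      have hD := unitary_hs hDmem
      have hVr : ∀ k l : Fin t, V ((w, k), (z, l))
          = (Fintype.card G : ℂ)⁻¹ * (Fintype.card G : ℂ)⁻¹ * ((f z * (f w)ᴴ) l k) := by
        intro k l
        simp only [hV, Matrix.mul_apply, Matrix.conjTranspose_apply, Complex.star_def]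
        congr 1
        exact Finset.sum_congr rfl fun j _ => mul_comm _ _
      calc ∑ k, ∑ l, Complex.normSq (V ((w, k), (z, l)))
          = ∑ k, ∑ l, ((Fintype.card G : ℝ) * (Fintype.card G : ℝ))⁻¹ *
              (((Fintype.card G : ℝ) * (Fintype.card G : ℝ))⁻¹ *
                Complex.normSq ((f z * (f w)ᴴ) l k)) := by
            refine Finset.sum_congr rfl fun k _ => Finset.sum_congr rfl fun l _ => ?_
            rw [hVr k l, Complex.normSq_mul, Complex.normSq_mul, Complex.normSq_inv,
              Complex.normSq_natCast]
            ring
        _ = ((Fintype.card G : ℝ) * (Fintype.card G : ℝ))⁻¹ *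
              (((Fintype.card G : ℝ) * (Fintype.card G : ℝ))⁻¹ * ↑t) := by
            simp only [← Finset.mul_sum]
            rw [Finset.sum_comm, hD]
    have hu2 : ∑ i, Complex.normSq (U (e.symm i))
        = (Fintype.card G : ℝ) * ((Fintype.card G : ℝ) * t) := by
      rw [Equiv.sum_comp e.symm fun m => Complex.normSq (U m)]
      simp only [Fintype.sum_prod_type]
      have hsw : ∀ w : G, (∑ k : Fin t, ∑ z : G, ∑ l : Fin t, Complex.normSq (U ((w, k), (z, l))))
          = ∑ z : G, ∑ k : Fin t, ∑ l : Fin t, Complex.normSq (U ((w, k), (z, l))) :=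
        fun w => Finset.sum_comm
      simp only [hsw, hBh, Finset.sum_const, Finset.card_univ, nsmul_eq_mul]

    have hv2 : ∑ i, Complex.normSq (V (e.symm i))
        = (Fintype.card G : ℝ) * ((Fintype.card G : ℝ) *
            (((Fintype.card G : ℝ) * (Fintype.card G : ℝ))⁻¹ *
              (((Fintype.card G : ℝ) * (Fintype.card G : ℝ))⁻¹ * t))) := by
      rw [Equiv.sum_comp e.symm fun m => Complex.normSq (V m)]
      simp only [Fintype.sum_prod_type]
      have hsw : ∀ w : G, (∑ k : Fin t, ∑ z : G, ∑ l : Fin t, Complex.normSq (V ((w, k), (z, l))))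
          = ∑ z : G, ∑ k : Fin t, ∑ l : Fin t, Complex.normSq (V ((w, k), (z, l))) :=
        fun w => Finset.sum_comm
      simp only [hsw, hBf, Finset.sum_const, Finset.card_univ, nsmul_eq_mul]
    simp only [vnorm]
    rw [hu2, hv2, ← Real.sqrt_mul (by positivity)]
    have hval : (Fintype.card G : ℝ) * ((Fintype.card G : ℝ) * t) *
        ((Fintype.card G : ℝ) * ((Fintype.card G : ℝ) *
            (((Fintype.card G : ℝ) * (Fintype.card G : ℝ))⁻¹ *
              (((Fintype.card G : ℝ) * (Fintype.card G : ℝ))⁻¹ * t)))) = (t : ℝ) * t := by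
      field_simp
    rw [hval, Real.sqrt_mul_self (by positivity)]
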